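/- Let (A,‖·‖) be a commutative unital complex Banach algebra which is semisimple (Jacobson radical {0}) and regular, and let |·| be any algebra norm on A. Then every ‖·‖-continuous nonzero multiplicative linear functional on A is |·|-continuous, i.e., M(A,|·|) = M(A,‖·‖). -/

import Mathlib

/-- `M(A)`: the nonzero continuous multiplicative linear functionals on the
topological algebra `A`. -/
def CharSpace (A : Type*) [Ring A] [Module ℂ A] [TopologicalSpace A] :
    Set (A → ℂ) :=
  {f | (∀ x y, f (x + y) = f x + f y) ∧ (∀ (c : ℂ) (x : A), f (c • x) = c * f x) ∧
       (∀ x y, f (x * y) = f x * f y) ∧ f ≠ 0 ∧ Continuous f}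

/-- `M(A, q)`: the nonzero multiplicative linear functionals on `A` that are
continuous (i.e. bounded) with respect to the norm `q`. -/
def MSpec {A : Type*} [Ring A] [Module ℂ A] (q : A → ℝ) : Set (A → ℂ) :=
  {f | (∀ x y, f (x + y) = f x + f y) ∧ (∀ (c : ℂ) (x : A), f (c • x) = c * f x) ∧
       (∀ x y, f (x * y) = f x * f y) ∧ f ≠ 0 ∧ (∃ C : ℝ, ∀ x, ‖f x‖ ≤ C * q x)}

/-- `A` is regular: for every subset `F` of `M(A)` closed in the weak-*
(pointwise convergence) topology and every `f₁ ∈ M(A) \ F` there is `x ∈ A`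
vanishing on `F` with `f₁ x ≠ 0`. -/
def IsRegularAlg (A : Type*) [Ring A] [Module ℂ A] [TopologicalSpace A] : Prop :=
  ∀ F : Set (A → ℂ), F ⊆ CharSpace A →
    IsClosed {g : ↥(CharSpace A) | (g : A → ℂ) ∈ F} →
    ∀ f₁ ∈ CharSpace A, f₁ ∉ F → ∃ x : A, (∀ f ∈ F, f x = 0) ∧ f₁ x ≠ 0

section Helpers

open WeakDual

namespace RegAux

/-- Type synonym used to carry the auxiliary algebra norm. -/
def WithQ (A : Type*) : Type _ := A

variable {A : Type*} [NormedCommRing A] [NormedAlgebra ℂ A] [CompleteSpace A]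

theorem map_zero_of {f : A → ℂ} (hadd : ∀ x y, f (x + y) = f x + f y) : f 0 = 0 := by
  have h := hadd 0 0
  rw [add_zero] at h
  exact (left_eq_add.mp h)

theorem map_one_of {f : A → ℂ} (hmul : ∀ x y, f (x * y) = f x * f y) (hne : f ≠ 0) :
    f 1 = 1 := by
  obtain ⟨x, hx⟩ := Function.ne_iff.mp hne
  have hx' : f x ≠ 0 := by simpa using hx
  have h := hmul x 1
  rw [mul_one] at h
  exact mul_left_cancel₀ hx' (by rw [← h, mul_one])

/-- The bundled ring hom. -/
def mkRingHom (f : A → ℂ) (hadd : ∀ x y, f (x + y) = f x + f y)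
    (hmul : ∀ x y, f (x * y) = f x * f y) (hne : f ≠ 0) : A →+* ℂ where
  toFun := f
  map_one' := map_one_of hmul hne
  map_mul' := hmul
  map_zero' := map_zero_of hadd
  map_add' := hadd

/-- The bundled algebra hom. -/
def mkAlgHom (f : A → ℂ) (hadd : ∀ x y, f (x + y) = f x + f y)
    (hsmul : ∀ (c : ℂ) (x : A), f (c • x) = c * f x)
    (hmul : ∀ x y, f (x * y) = f x * f y) (hne : f ≠ 0) : A →ₐ[ℂ] ℂ :=
  AlgHom.mk' (mkRingHom f hadd hmul hne) fun c x => by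
    show f (c • x) = c • f x
    rw [smul_eq_mul]
    exact hsmul c x

theorem norm_apply_le (f : A → ℂ) (hadd : ∀ x y, f (x + y) = f x + f y)
    (hsmul : ∀ (c : ℂ) (x : A), f (c • x) = c * f x)
    (hmul : ∀ x y, f (x * y) = f x * f y) (hne : f ≠ 0) (x : A) :
    ‖f x‖ ≤ ‖x‖ * ‖(1 : A)‖ :=
  spectrum.norm_le_norm_mul_of_mem
    (AlgHom.apply_mem_spectrum (mkAlgHom f hadd hsmul hmul hne) x)

theorem continuous_of (f : A → ℂ) (hadd : ∀ x y, f (x + y) = f x + f y)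
    (hsmul : ∀ (c : ℂ) (x : A), f (c • x) = c * f x)
    (hmul : ∀ x y, f (x * y) = f x * f y) (hne : f ≠ 0) : Continuous f := by
  have h : Continuous (mkAlgHom f hadd hsmul hmul hne) :=
    AddMonoidHomClass.continuous_of_bound (mkAlgHom f hadd hsmul hmul hne) ‖(1 : A)‖
      (fun x => by rw [mul_comm]; exact norm_apply_le f hadd hsmul hmul hne x)
  exact h

theorem mem_charSpace_of (f : A → ℂ) (hadd : ∀ x y, f (x + y) = f x + f y)
    (hsmul : ∀ (c : ℂ) (x : A), f (c • x) = c * f x)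
    (hmul : ∀ x y, f (x * y) = f x * f y) (hne : f ≠ 0) : f ∈ CharSpace A :=
  ⟨hadd, hsmul, hmul, hne, continuous_of f hadd hsmul hmul hne⟩

theorem charSpace_sub {f : A → ℂ} (hf : f ∈ CharSpace A) (a b : A) :
    f (a - b) = f a - f b := by
  obtain ⟨hadd, hsmul, -, -, -⟩ := hf
  have h : f (a + (-1 : ℂ) • b) = f a + (-1 : ℂ) * f b := by rw [hadd, hsmul]
  rw [neg_one_smul] at h
  simpa [sub_eq_add_neg] using h

theorem comp_mem_charSpace {A' : Type*} [NormedCommRing A'] [NormedAlgebra ℂ A']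
    (ρ : A →ₐ[ℂ] A') (χ : characterSpace ℂ A') :
    (fun a => χ (ρ a)) ∈ CharSpace A := by
  have hadd : ∀ x y, χ (ρ (x + y)) = χ (ρ x) + χ (ρ y) := fun x y => by
    rw [map_add, map_add]
  have hsmul : ∀ (c : ℂ) (x : A), χ (ρ (c • x)) = c * χ (ρ x) := fun c x => by
    rw [map_smul, map_smul, smul_eq_mul]
  have hmul : ∀ x y, χ (ρ (x * y)) = χ (ρ x) * χ (ρ y) := fun x y => by
    rw [map_mul, map_mul]
  have hne : (fun a => χ (ρ a)) ≠ 0 := by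
    intro h
    have h1 := congrFun h 1
    rw [map_one, map_one] at h1
    exact one_ne_zero h1
  exact mem_charSpace_of _ hadd hsmul hmul hne

/-- A multiplicative functional bounded w.r.t. a submultiplicative norm is
automatically bounded with constant `1`. -/
theorem bound_le_one {Q : Type*} [NormedCommRing Q] [NormedAlgebra ℂ Q] {f : A → ℂ}
    (hmul : ∀ x y, f (x * y) = f x * f y) (e : A ≃ₐ[ℂ] Q) {C : ℝ}
    (hC : ∀ x, ‖f x‖ ≤ C * ‖e x‖) (x : A) : ‖f x‖ ≤ ‖e x‖ := by
  by_contra hlt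
  push_neg at hlt
  set s := ‖e x‖ with hs
  set t := ‖f x‖ with ht
  have hs0 : 0 ≤ s := norm_nonneg _
  have ht0 : 0 < t := lt_of_le_of_lt hs0 hlt
  have hfpow : ∀ n : ℕ, f (x ^ (n + 1)) = (f x) ^ (n + 1) := by
    intro n
    induction n with
    | zero => simp
    | succ k ih => rw [pow_succ, hmul, ih]; ring
  rcases le_or_gt C 0 with hC0 | hC0
  · have h1 := hC x
    nlinarith [mul_nonpos_of_nonpos_of_nonneg hC0 hs0]
  · have key : ∀ n : ℕ, t ^ (n + 1) ≤ C * s ^ (n + 1) := by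
      intro n
      have h1 := hC (x ^ (n + 1))
      rw [hfpow n, norm_pow] at h1
      have h2 : ‖e (x ^ (n + 1))‖ ≤ s ^ (n + 1) := by
        rw [map_pow]
        exact norm_pow_le' (e x) (Nat.succ_pos n)
      calc t ^ (n + 1) ≤ C * ‖e (x ^ (n + 1))‖ := h1
        _ ≤ C * s ^ (n + 1) := mul_le_mul_of_nonneg_left h2 hC0.le
  -- now separate the cases `s = 0` and `s > 0`
    rcases eq_or_lt_of_le hs0 with hseq | hspos
    · have h0 := key 0
      rw [← hseq] at h0
      simp at h0
      nlinarith
    · have hr : 1 < t / s := (one_lt_div hspos).mpr hlt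
      obtain ⟨n, hn⟩ := pow_unbounded_of_one_lt C hr
      have hn' : C < (t / s) ^ (n + 1) :=
        lt_of_lt_of_le hn (pow_le_pow_right₀ hr.le (Nat.le_succ n))
      have h3 : t ^ (n + 1) ≤ C * s ^ (n + 1) := key n
      have h4 : C * s ^ (n + 1) < (t / s) ^ (n + 1) * s ^ (n + 1) := by
        have hpow : (0:ℝ) < s ^ (n + 1) := pow_pos hspos _
        exact mul_lt_mul_of_pos_right hn' hpow
      rw [div_pow, div_mul_cancel₀] at h4
      · exact absurd (h3.trans_lt h4) (lt_irrefl _)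
      · exact ne_of_gt (pow_pos hspos _)

end RegAux

end Helpers

section Main

open WeakDual UniformSpace Filter Topology RegAux

/-- Core lemma: in a semisimple regular commutative Banach algebra, every
(`‖·‖`-continuous) character is contractive w.r.t. any other algebra norm
(presented as the norm of an abstract normed algebra `Q` algebra-isomorphic
to `A`). -/
theorem RegAux.qbound {A Q : Type*} [NormedCommRing A] [NormedAlgebra ℂ A] [CompleteSpace A]
    [NormedCommRing Q] [NormedAlgebra ℂ Q]
    (hss : Ideal.jacobson (⊥ : Ideal A) = ⊥) (hreg : IsRegularAlg A)
    (ι : A ≃ₐ[ℂ] Q) {f₀ : A → ℂ} (hf₀ : f₀ ∈ CharSpace A) (x : A) :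
    ‖f₀ x‖ ≤ ‖ι x‖ := by
  classical
  by_contra hcon
  -- the set of `ι`-contractive characters
  set E : Set (A → ℂ) := {f | f ∈ CharSpace A ∧ ∀ a, ‖f a‖ ≤ ‖ι a‖} with hE
  have hEsub : E ⊆ CharSpace A := fun f hf => hf.1
  have hEclosed : IsClosed {g : ↥(CharSpace A) | (g : A → ℂ) ∈ E} := by
    have hset : {g : ↥(CharSpace A) | (g : A → ℂ) ∈ E} =
        ⋂ a : A, {g : ↥(CharSpace A) | ‖(g : A → ℂ) a‖ ≤ ‖ι a‖} := by
      ext g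
      simp only [Set.mem_setOf_eq, Set.mem_iInter, hE]
      exact ⟨fun h a => h.2 a, fun h => ⟨g.2, h⟩⟩
    rw [hset]
    exact isClosed_iInter fun a =>
      isClosed_le (((continuous_apply a).comp continuous_subtype_val).norm) continuous_const
  have hf₀E : f₀ ∉ E := fun h => hcon (h.2 x)
  obtain ⟨x₀, hx₀E, hx₀f₀⟩ := hreg E hEsub hEclosed f₀ hf₀ hf₀E
  -- normalize to get `y` with `f₀ y = 1` and `f y = 0` for `f ∈ E`
  set y : A := (f₀ x₀)⁻¹ • x₀ with hy
  have hfy : ∀ f, f ∈ CharSpace A → f y = (f₀ x₀)⁻¹ * f x₀ := fun f hf => hf.2.1 _ _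
  have hf₀y : f₀ y = 1 := by rw [hfy f₀ hf₀, inv_mul_cancel₀ hx₀f₀]
  have hEy : ∀ f ∈ E, f y = 0 := fun f hf => by
    rw [hfy f (hEsub hf), hx₀E f hf, mul_zero]
  -- the closed set `C` and the element `z`
  set C : Set (A → ℂ) := {f | f ∈ CharSpace A ∧ ‖f y‖ ≤ 1 / 2} with hC
  have hCsub : C ⊆ CharSpace A := fun f hf => hf.1
  have hCclosed : IsClosed {g : ↥(CharSpace A) | (g : A → ℂ) ∈ C} := by
    have hset : {g : ↥(CharSpace A) | (g : A → ℂ) ∈ C} =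
        {g : ↥(CharSpace A) | ‖(g : A → ℂ) y‖ ≤ 1 / 2} := by
      ext g
      simp only [Set.mem_setOf_eq, hC]
      exact ⟨fun h => h.2, fun h => ⟨g.2, h⟩⟩
    rw [hset]
    exact isClosed_le (((continuous_apply y).comp continuous_subtype_val).norm) continuous_const
  have hf₀C : f₀ ∉ C := by
    intro h
    have h2 := h.2
    rw [hf₀y] at h2
    norm_num at h2
  obtain ⟨x₁, hx₁C, hx₁f₀⟩ := hreg C hCsub hCclosed f₀ hf₀ hf₀C
  set z : A := (f₀ x₁)⁻¹ • x₁ with hz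
  have hf₀z : f₀ z = 1 := by rw [hf₀.2.1, inv_mul_cancel₀ hx₁f₀]
  have hCz : ∀ f ∈ C, f z = 0 := fun f hf => by
    rw [(hCsub hf).2.1, hx₁C f hf, mul_zero]
  -- the closed set `D`
  set D : Set (A → ℂ) := {f | f ∈ CharSpace A ∧ 1 / 2 ≤ ‖f y‖} with hD
  have hDsub : D ⊆ CharSpace A := fun f hf => hf.1
  have hDclosed : IsClosed {g : ↥(CharSpace A) | (g : A → ℂ) ∈ D} := by
    have hset : {g : ↥(CharSpace A) | (g : A → ℂ) ∈ D} =
        {g : ↥(CharSpace A) | 1 / 2 ≤ ‖(g : A → ℂ) y‖} := by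
      ext g
      simp only [Set.mem_setOf_eq, hD]
      exact ⟨fun h => h.2, fun h => ⟨g.2, h⟩⟩
    rw [hset]
    exact isClosed_le continuous_const (((continuous_apply y).comp continuous_subtype_val).norm)
  have hf₀D : f₀ ∈ D := ⟨hf₀, by rw [hf₀y]; norm_num⟩
  -- the closed ideal of elements annihilated by `D`
  set I : Ideal A :=
    { carrier := {a | ∀ f ∈ D, f a = 0}
      add_mem' := fun {a} {b} ha hb => fun f hf => by
        rw [(hDsub hf).1, ha f hf, hb f hf, add_zero]
      zero_mem' := fun f hf => map_zero_of (hDsub hf).1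
      smul_mem' := fun c a ha => fun f hf => by
        show f (c * a) = 0
        rw [(hDsub hf).2.2.1, ha f hf, mul_zero] } with hIdef
  have hIclosed : IsClosed (I : Set A) := by
    have hset : (I : Set A) = ⋂ f ∈ D, {a : A | f a = 0} := by
      ext a
      simp only [Set.mem_iInter, Set.mem_setOf_eq]
      exact ⟨fun h f hf => h f hf, fun h f hf => h f hf⟩
    rw [hset]
    exact isClosed_biInter fun f hf => isClosed_eq (hDsub hf).2.2.2.2 continuous_const
  have hItop : I ≠ ⊤ := by
    intro htop
    have h1 : (1 : A) ∈ I := htop ▸ Submodule.mem_top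
    have h2 := h1 f₀ hf₀D
    rw [map_one_of hf₀.2.2.1 hf₀.2.2.2.1] at h2
    exact one_ne_zero h2
  haveI : Nontrivial (A ⧸ I) := Ideal.Quotient.nontrivial_iff.mpr hItop
  haveI : IsClosed (I : Set A) := hIclosed
  -- the quotient map as an algebra hom
  set π : A →ₐ[ℂ] A ⧸ I := AlgHom.mk' (Ideal.Quotient.mk I) (fun c a => by
    rw [Algebra.smul_def, Algebra.smul_def, map_mul, Ideal.Quotient.mk_algebraMap]) with hπ
  -- `mk y` is invertible in the quotient
  have hspec : (0 : ℂ) ∉ spectrum ℂ (Ideal.Quotient.mk I y) := by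
    intro h0
    obtain ⟨φ, hφ⟩ := WeakDual.CharacterSpace.mem_spectrum_iff_exists.mp h0
    have hψ : (fun a => φ (π a)) ∈ CharSpace A := comp_mem_charSpace π φ
    have hψI : ∀ a ∈ I, φ (π a) = 0 := fun a ha => by
      have hz0 : π a = 0 := Ideal.Quotient.eq_zero_iff_mem.mpr ha
      rw [hz0, map_zero]
    have hψD : (fun a => φ (π a)) ∈ D := by
      by_contra hnD
      obtain ⟨a, haD, haψ⟩ := hreg D hDsub hDclosed _ hψ hnD
      exact haψ (hψI a haD)
    have h2 : 1 / 2 ≤ ‖φ (π y)‖ := hψD.2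
    have h3 : φ (π y) = 0 := hφ
    rw [h3] at h2
    norm_num at h2
  have hyunit : IsUnit (Ideal.Quotient.mk I y) := (spectrum.zero_notMem_iff ℂ).mp hspec
  obtain ⟨b, hb⟩ := hyunit.exists_right_inv
  obtain ⟨v, rfl⟩ := Ideal.Quotient.mk_surjective b
  have hvI : y * v - 1 ∈ I := by
    rw [← Ideal.Quotient.eq_zero_iff_mem, map_sub, map_mul, map_one, hb, sub_self]
  set w : A := y * v with hw
  have hwD : ∀ f ∈ D, f w = 1 := by
    intro f hf
    have h1 := hvI f hf
    have h2 := charSpace_sub (hDsub hf) w 1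
    rw [h1] at h2
    rw [map_one_of (hDsub hf).2.2.1 (hDsub hf).2.2.2.1] at h2
    exact sub_eq_zero.mp h2.symm
  have hwE : ∀ f ∈ E, f w = 0 := fun f hf => by
    rw [(hEsub hf).2.2.1, hEy f hf, zero_mul]
  -- semisimplicity: `z * (1 - w) = 0`
  have hzw : z * (1 - w) = 0 := by
    have hmem : z * (1 - w) ∈ Ideal.jacobson (⊥ : Ideal A) := by
      show z * (1 - w) ∈ sInf {J : Ideal A | ⊥ ≤ J ∧ J.IsMaximal}
      refine Submodule.mem_sInf.mpr fun (J : Ideal A) hJ => ?_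
      haveI : Ideal.IsMaximal J := hJ.2
      set φM := Ideal.toCharacterSpace J with hφM
      have hgCS : (fun a => φM ((AlgHom.id ℂ A) a)) ∈ CharSpace A :=
        comp_mem_charSpace (AlgHom.id ℂ A) φM
      have hgCS' : (⇑φM : A → ℂ) ∈ CharSpace A := hgCS
      have hval : φM (z * (1 - w)) = 0 := by
        rw [map_mul, map_sub, map_one]
        by_cases hmD : (⇑φM : A → ℂ) ∈ D
        · rw [hwD _ hmD]
          ring
        · have hmC : (⇑φM : A → ℂ) ∈ C := by
            refine ⟨hgCS', ?_⟩
            by_contra hgt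
            exact hmD ⟨hgCS', le_of_not_ge hgt⟩
          have h4 := hCz _ hmC
          rw [h4]
          ring
      have hle : J ≤ RingHom.ker φM := by
        intro a ha
        refine RingHom.mem_ker.mpr ?_
        rw [hφM]
        exact J.toCharacterSpace_apply_eq_zero_of_mem ha
      have hker : RingHom.ker φM ≠ ⊤ := by
        rw [Ideal.ne_top_iff_one]
        intro h1
        have h2 := RingHom.mem_ker.mp h1
        rw [map_one] at h2
        exact one_ne_zero h2
      have hJeq : J = RingHom.ker φM := ‹Ideal.IsMaximal J›.eq_of_le hker hle
      rw [hJeq]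
      exact RingHom.mem_ker.mpr hval
    rw [hss] at hmem
    exact (Ideal.mem_bot).mp hmem
  have hz1 : z = z * w := by
    have h := hzw
    rw [mul_one_sub, sub_eq_zero] at h
    exact h
  have hzwn : ∀ n : ℕ, z = z * w ^ n := by
    intro n
    induction n with
    | zero => simp
    | succ k ih =>
      rw [pow_succ, ← mul_assoc, ← ih, ← hz1]
  -- pass to the completion of `Q`
  set bb : Completion Q := ((ι w : Q) : Completion Q) with hbdef
  have hspecB : spectrum ℂ bb ⊆ {0} := by
    intro ζ hζ
    obtain ⟨χ, hχ⟩ := WeakDual.CharacterSpace.mem_spectrum_iff_exists.mp hζ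
    set ρ : A →ₐ[ℂ] Completion Q :=
      AlgHom.mk' ((UniformSpace.Completion.coeRingHom).comp ι.toAlgHom.toRingHom)
        (fun c a => by
          show ((ι (c • a) : Q) : Completion Q) = c • ((ι a : Q) : Completion Q)
          rw [map_smul, UniformSpace.Completion.coe_smul]) with hρ
    have hg : (fun a => χ (ρ a)) ∈ CharSpace A := comp_mem_charSpace ρ χ
    have hgE : (fun a => χ (ρ a)) ∈ E := by
      refine ⟨hg, ?_⟩
      refine bound_le_one hg.2.2.1 ι (C := ‖CharacterSpace.toCLM χ‖) (fun a => ?_)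
      have h1 : ‖(CharacterSpace.toCLM χ) (ρ a)‖ ≤ ‖CharacterSpace.toCLM χ‖ * ‖ρ a‖ :=
        (CharacterSpace.toCLM χ).le_opNorm (ρ a)
      have h2 : ‖ρ a‖ = ‖ι a‖ := UniformSpace.Completion.norm_coe _
      rw [h2] at h1
      exact h1
    have h0 : χ (ρ w) = 0 := hwE _ hgE
    have hb' : χ bb = 0 := h0
    rw [← hχ] at *
    exact Set.mem_singleton_iff.mpr hb'
  have hrad : spectralRadius ℂ bb = 0 := by
    refine le_antisymm ?_ zero_le
    refine iSup₂_le fun k hk => ?_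
    have hk0 : k = 0 := hspecB hk
    simp [hk0]
  have htend := spectrum.pow_norm_pow_one_div_tendsto_nhds_spectralRadius bb
  rw [hrad] at htend
  have hev : ∀ᶠ n : ℕ in atTop, ENNReal.ofReal (‖bb ^ n‖ ^ (1 / (n : ℝ))) < 1 :=
    htend.eventually_lt_const (by norm_num)
  obtain ⟨n, hnlt, hn1⟩ := (hev.and (eventually_ge_atTop 1)).exists
  have hbn : ‖bb ^ n‖ = ‖ι (w ^ n)‖ := by
    calc ‖bb ^ n‖ = ‖(UniformSpace.Completion.coeRingHom (ι w)) ^ n‖ := rfl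
      _ = ‖UniformSpace.Completion.coeRingHom ((ι w) ^ n)‖ := by rw [map_pow]
      _ = ‖((ι w) ^ n : Q)‖ := UniformSpace.Completion.norm_coe _
      _ = ‖ι (w ^ n)‖ := by rw [map_pow]
  have hncast : ((n : ℝ)) ≠ 0 := Nat.cast_ne_zero.mpr (by omega)
  have hlt1 : ‖bb ^ n‖ < 1 := by
    have h1 : ‖bb ^ n‖ ^ (1 / (n : ℝ)) < 1 := by
      have h2 := hnlt
      rwa [← ENNReal.ofReal_one, ENNReal.ofReal_lt_ofReal_iff one_pos] at h2
    have h2 : ((‖bb ^ n‖ ^ (1 / (n : ℝ))) : ℝ) ^ (n : ℕ) = ‖bb ^ n‖ := by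
      rw [← Real.rpow_natCast (‖bb ^ n‖ ^ (1 / (n : ℝ))) n, ← Real.rpow_mul (norm_nonneg _),
        one_div, inv_mul_cancel₀ hncast, Real.rpow_one]
    calc ‖bb ^ n‖ = ((‖bb ^ n‖ ^ (1 / (n : ℝ))) : ℝ) ^ (n : ℕ) := h2.symm
      _ < 1 := pow_lt_one₀ (Real.rpow_nonneg (norm_nonneg _) _) h1 (by omega)
  have hzne : z ≠ 0 := by
    intro h
    rw [h] at hf₀z
    rw [map_zero_of hf₀.1] at hf₀z
    exact zero_ne_one hf₀z
  have hιz : 0 < ‖ι z‖ := by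
    apply norm_pos_iff.mpr
    intro h
    exact hzne (by simpa using congrArg ι.symm h)
  have hineq : ‖ι z‖ ≤ ‖ι z‖ * ‖ι (w ^ n)‖ := by
    conv_lhs => rw [hzwn n]
    rw [map_mul]
    exact norm_mul_le _ _
  rw [← hbn] at hineq
  nlinarith [hlt1, hιz, hineq]

/-- Let `A` be a regular semisimple commutative unital complex Banach algebra and
`q` any algebra norm on `A`. Then the `q`-continuous nonzero multiplicative linear
functionals coincide with the `‖·‖`-continuous ones: `M(A,q) = M(A,‖·‖)`. -/
theorem mSpec_eq_charSpace_of_regular_semisimple {A : Type*} [NormedCommRing A]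
    [NormedAlgebra ℂ A] [CompleteSpace A]
    (hss : Ideal.jacobson (⊥ : Ideal A) = ⊥)
    (hreg : IsRegularAlg A)
    (q : A → ℝ)
    (hq0 : ∀ x, q x = 0 ↔ x = 0)
    (hadd : ∀ x y, q (x + y) ≤ q x + q y)
    (hsmul : ∀ (c : ℂ) (x : A), q (c • x) = ‖c‖ * q x)
    (hmul : ∀ x y, q (x * y) ≤ q x * q y) :
    MSpec q = CharSpace A := by
  classical
  letI : CommRing (WithQ A) := (inferInstance : CommRing A)
  letI : Algebra ℂ (WithQ A) := (inferInstance : Algebra ℂ A)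
  letI instNACG : NormedAddCommGroup (WithQ A) :=
    AddGroupNorm.toNormedAddCommGroup
      { toFun := q
        map_zero' := (hq0 0).mpr rfl
        add_le' := hadd
        neg' := fun x => by
          have h := hsmul (-1) x
          rw [neg_one_smul ℂ (M := A) x] at h
          simp at h
          exact h
        eq_zero_of_map_eq_zero' := fun x hx => (hq0 x).mp hx }
  letI instNCR : NormedCommRing (WithQ A) :=
    { instNACG, (inferInstance : CommRing (WithQ A)) with norm_mul_le := hmul }
  letI instNA : NormedAlgebra ℂ (WithQ A) :=
    { (inferInstance : Algebra ℂ (WithQ A)) with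
      norm_smul_le := fun c x => le_of_eq (hsmul c x) }
  let ι : A ≃ₐ[ℂ] WithQ A :=
    { toFun := fun a => a
      invFun := fun a => a
      left_inv := fun _ => rfl
      right_inv := fun _ => rfl
      map_mul' := fun _ _ => rfl
      map_add' := fun _ _ => rfl
      commutes' := fun _ => rfl }
  have hq : ∀ a : A, ‖ι a‖ = q a := fun _ => rfl
  ext f
  constructor
  · rintro ⟨h1, h2, h3, h4, -⟩
    exact ⟨h1, h2, h3, h4, RegAux.continuous_of f h1 h2 h3 h4⟩
  · intro hf
    obtain ⟨h1, h2, h3, h4, -⟩ := hf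
    refine ⟨h1, h2, h3, h4, 1, fun a => ?_⟩
    rw [one_mul]
    have hb : ‖f a‖ ≤ ‖ι a‖ := @RegAux.qbound A (WithQ A) _ _ _ instNCR instNA hss hreg ι f
      ⟨h1, h2, h3, h4, RegAux.continuous_of f h1 h2 h3 h4⟩ a
    rw [hq a] at hb
    exact hb

end Main
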